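/- Writing c = [a,b], d = [c,a] and e = [d,a] in Γ (with [x,y] = x⁻¹y⁻¹xy), the element d²e is conjugate in Γ to its inverse (d²e)⁻¹; in particular d⁴ ∈ γ₄(Γ), the fourth term of the lower central series of Γ. -/

import Mathlib

namespace PinkGroup

mutual
  /-- forward action of the generator `a` -/
  def aF : List Bool → List Bool
    | [] => []
    | false :: w => true :: bF w
    | true :: w => false :: w
  /-- forward action of the generator `b` -/
  def bF : List Bool → List Bool
    | [] => []
    | false :: w => false :: aF w
    | true :: w => true :: w
end

mutual
  /-- inverse of `aF` -/
  def aIF : List Bool → List Bool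
    | [] => []
    | true :: w => false :: bIF w
    | false :: w => true :: w
  /-- inverse of `bF` -/
  def bIF : List Bool → List Bool
    | [] => []
    | false :: w => false :: aIF w
    | true :: w => true :: w
end

lemma inv_all (w : List Bool) :
    aF (aIF w) = w ∧ bF (bIF w) = w ∧ aIF (aF w) = w ∧ bIF (bF w) = w := by
  induction w with
  | nil => simp [aF, bF, aIF, bIF]
  | cons x w ih =>
    cases x <;>
      simp [aF, bF, aIF, bIF, ih.1, ih.2.1, ih.2.2.1, ih.2.2.2]

/-- The generator `a` of Pink's group: `(1w)^a = 2 w^b`, `(2w)^a = 1w`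
(where the letter `1` is `false` and the letter `2` is `true`). -/
def a : Equiv.Perm (List Bool) :=
  ⟨aF, aIF, fun w => (inv_all w).2.2.1, fun w => (inv_all w).1⟩

/-- The generator `b` of Pink's group: `(1w)^b = 1 w^a`, `(2w)^b = 2w`. -/
def b : Equiv.Perm (List Bool) :=
  ⟨bF, bIF, fun w => (inv_all w).2.2.2, fun w => (inv_all w).2.1⟩

/-- Pink's group `Γ`, the iterated monodromy group of `z^2 - 1`. -/
def Gam : Subgroup (Equiv.Perm (List Bool)) := Subgroup.closure {a, b}

lemma a_mem : a ∈ Gam := Subgroup.subset_closure (by simp)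

lemma b_mem : b ∈ Gam := Subgroup.subset_closure (by simp)


/-- `c = [a,b] = a⁻¹b⁻¹ab` (the paper's commutator convention). -/
def cc : Equiv.Perm (List Bool) := a⁻¹ * b⁻¹ * a * b

/-- `d = [c,a] = c⁻¹a⁻¹ca`. -/
def dd : Equiv.Perm (List Bool) := cc⁻¹ * a⁻¹ * cc * a

/-- `e = [d,a] = d⁻¹a⁻¹da`. -/
def ee : Equiv.Perm (List Bool) := dd⁻¹ * a⁻¹ * dd * a

lemma key (w : List Bool) :
    bIF (aIF (aIF (bF (aIF (aIF (bIF (aF (bF (aF (aF (bIF (aF (bF (w)))))))))))))) = aIF (aIF (bIF (aIF (bF (aF (aF (bIF (aF (bF (w)))))))))) ∧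
    bIF (bIF (bF (aF (bF (aIF (w)))))) = bIF (aF (bF (aIF (w)))) ∧
    bF (aF (bIF (w))) = bF (aF (bIF (w))) ∧
    aF (w) = aF (w) ∧
    w = w ∧
    bF (w) = bF (w) ∧
    bF (aIF (w)) = bF (aIF (w)) ∧
    aF (bIF (w)) = aF (bIF (w)) ∧
    aIF (aIF (aF (w))) = aIF (w) ∧
    bIF (w) = bIF (w) ∧
    aIF (w) = aIF (w) ∧
    bIF (bF (w)) = w ∧
    aIF (aF (w)) = w ∧
    aIF (bIF (aF (bIF (aIF (bF (bF (aF (w)))))))) = bIF (aIF (bIF (bF (bF (aF (w)))))) ∧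
    aIF (aF (aF (w))) = aIF (aF (aF (w))) ∧
    bIF (bF (w)) = bIF (bF (w)) ∧
    aIF (aF (w)) = aIF (aF (w)) ∧
    bIF (bF (aIF (bIF (bF (w))))) = aIF (bIF (bF (w))) ∧
    aIF (aF (bIF (w))) = bIF (w) ∧
    bIF (bF (aIF (w))) = aIF (w) := by
  induction w with
  | nil => simp [aF, bF, aIF, bIF]
  | cons x w ih =>
    obtain ⟨h0, h1, h2, h3, h4, h5, h6, h7, h8, h9, h10, h11, h12, h13, h14, h15, h16, h17, h18, h19⟩ := ih
    cases x <;> simp [aF, bF, aIF, bIF, h0, h1, h2, h3, h4, h5, h6, h7, h8, h9, h10, h11, h12, h13, h14, h15, h16, h17, h18, h19]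


lemma a_app (w : List Bool) : a w = aF w := rfl
lemma b_app (w : List Bool) : b w = bF w := rfl
lemma a_inv_app (w : List Bool) : a⁻¹ w = aIF w := rfl
lemma b_inv_app (w : List Bool) : b⁻¹ w = bIF w := rfl

lemma perm_key :
    b⁻¹ * a⁻¹ * a⁻¹ * b * a⁻¹ * a⁻¹ * b⁻¹ * a * b * a * a * b⁻¹ * a * b =
    a⁻¹ * a⁻¹ * b⁻¹ * a⁻¹ * b * a * a * b⁻¹ * a * b := by
  apply Equiv.ext
  intro w
  simp only [Equiv.Perm.mul_apply, a_app, b_app, a_inv_app, b_inv_app]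
  exact (key w).1

lemma conj_key :
    (b⁻¹ * a * b)⁻¹ * (dd ^ 2 * ee) * (b⁻¹ * a * b) = (dd ^ 2 * ee)⁻¹ := by
  have h1 : (b⁻¹ * a * b)⁻¹ * (dd ^ 2 * ee) * (b⁻¹ * a * b) =
      b⁻¹ * a⁻¹ * a⁻¹ * b * a⁻¹ * a⁻¹ * b⁻¹ * a * b * a * a * b⁻¹ * a * b := by
    simp only [dd, ee, cc, pow_two]
    group
  have h2 : (dd ^ 2 * ee)⁻¹ =
      a⁻¹ * a⁻¹ * b⁻¹ * a⁻¹ * b * a * a * b⁻¹ * a * b := by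
    simp only [dd, ee, cc, pow_two, ← mul_assoc]
    group
    rw [zpow_two]
    group
  rw [h1, h2, perm_key]


lemma cc_mem : cc ∈ Gam :=
  mul_mem (mul_mem (mul_mem (inv_mem a_mem) (inv_mem b_mem)) a_mem) b_mem

lemma dd_mem : dd ∈ Gam :=
  mul_mem (mul_mem (mul_mem (inv_mem cc_mem) (inv_mem a_mem)) cc_mem) a_mem

lemma ee_mem : ee ∈ Gam :=
  mul_mem (mul_mem (mul_mem (inv_mem dd_mem) (inv_mem a_mem)) dd_mem) a_mem

open scoped commutatorElement in
/-- The element `d²e` is conjugate in `Γ` to its inverse; in particular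
`d⁴ ∈ γ₄(Γ)`, the fourth term of the lower central series of `Γ`
(here `lowerCentralSeries ↥Gam 3 = γ₄(Γ)` since `lowerCentralSeries ↥Gam 0 = γ₁(Γ) = Γ`). -/
theorem Gam_d_sq_e_conjugate_to_inverse :
    (∃ g ∈ Gam, g⁻¹ * (dd ^ 2 * ee) * g = (dd ^ 2 * ee)⁻¹) ∧
    (⟨dd, dd_mem⟩ : ↥Gam) ^ 4 ∈ (⊤ : Subgroup ↥Gam).lowerCentralSeries 3 := by
  set G : ↥Gam := ⟨b⁻¹ * a * b, mul_mem (mul_mem (inv_mem b_mem) a_mem) b_mem⟩ with hG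
  set A : ↥Gam := ⟨a, a_mem⟩ with hA
  set B : ↥Gam := ⟨b, b_mem⟩ with hB
  set C : ↥Gam := ⟨cc, cc_mem⟩ with hC
  set D : ↥Gam := ⟨dd, dd_mem⟩ with hD
  set E : ↥Gam := ⟨ee, ee_mem⟩ with hE
  have hCcomm : C = ⁅A⁻¹, B⁻¹⁆ := by
    apply Subtype.ext
    show cc = a⁻¹ * b⁻¹ * (a⁻¹)⁻¹ * (b⁻¹)⁻¹
    rw [cc]; group
  have hDcomm : D = ⁅C⁻¹, A⁻¹⁆ := by
    apply Subtype.ext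
    show dd = cc⁻¹ * a⁻¹ * (cc⁻¹)⁻¹ * (a⁻¹)⁻¹
    rw [dd]; group
  have hEcomm : E = ⁅D⁻¹, A⁻¹⁆ := by
    apply Subtype.ext
    show ee = dd⁻¹ * a⁻¹ * (dd⁻¹)⁻¹ * (a⁻¹)⁻¹
    rw [ee]; group
  have hC2 : C ∈ (⊤ : Subgroup ↥Gam).lowerCentralSeries 1 := by
    rw [hCcomm, Subgroup.lowerCentralSeries_succ]
    exact Subgroup.commutator_mem_commutator (by simp [Subgroup.lowerCentralSeries_zero]) (Subgroup.mem_top _)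
  have hD3 : D ∈ (⊤ : Subgroup ↥Gam).lowerCentralSeries 2 := by
    rw [hDcomm, Subgroup.lowerCentralSeries_succ]
    exact Subgroup.commutator_mem_commutator (inv_mem hC2) (Subgroup.mem_top _)
  have hE4 : E ∈ (⊤ : Subgroup ↥Gam).lowerCentralSeries 3 := by
    rw [hEcomm, Subgroup.lowerCentralSeries_succ]
    exact Subgroup.commutator_mem_commutator (inv_mem hD3) (Subgroup.mem_top _)
  have hX3 : D ^ 2 * E ∈ (⊤ : Subgroup ↥Gam).lowerCentralSeries 2 :=
    mul_mem (pow_mem hD3 2) (Subgroup.lowerCentralSeries_antitone ⊤ (by norm_num) hE4)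
  have hconj : G⁻¹ * (D ^ 2 * E) * G = (D ^ 2 * E)⁻¹ := by
    apply Subtype.ext
    push_cast
    exact conj_key
  have hsq : (D ^ 2 * E) ^ 2 = ⁅D ^ 2 * E, G⁆ := by
    have h : G * (D ^ 2 * E)⁻¹ * G⁻¹ = D ^ 2 * E := by
      rw [← hconj]; group
    rw [commutatorElement_def, pow_two]
    rw [show (D^2*E) * G * (D^2*E)⁻¹ * G⁻¹ = (D^2*E) * (G * (D^2*E)⁻¹ * G⁻¹) by group, h]
  have hsq4 : (D ^ 2 * E) ^ 2 ∈ (⊤ : Subgroup ↥Gam).lowerCentralSeries 3 := by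
    rw [hsq, Subgroup.lowerCentralSeries_succ]
    exact Subgroup.commutator_mem_commutator hX3 (Subgroup.mem_top _)
  constructor
  · exact ⟨b⁻¹ * a * b, mul_mem (mul_mem (inv_mem b_mem) a_mem) b_mem, conj_key⟩
  · have hconjE : (D ^ 2)⁻¹ * E * D ^ 2 ∈ (⊤ : Subgroup ↥Gam).lowerCentralSeries 3 :=
      have hnorm : ((⊤ : Subgroup ↥Gam).lowerCentralSeries 3).Normal := inferInstance
      hnorm.conj_mem' E hE4 (D ^ 2)
    have hfinal : (D ^ 2 * E) ^ 2 * ((D ^ 2)⁻¹ * E * D ^ 2 * E)⁻¹ = D ^ 4 := by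
      rw [pow_two]
      group
    rw [← hfinal]
    exact mul_mem hsq4 (inv_mem (mul_mem hconjE hE4))


end PinkGroup
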